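/- Let A, B, and I be categories, let F : A ⥤ B be a functor, and let a retraction datum (D, D̂, ε, μ) on I in B be given. Assume: (i) A has colimits of chains indexed by the poset ℕ; (ii) B has binary products; (iii) F preserves colimits of chains indexed by ℕ; (iv) F is projectable. Let D̃ : I × ℕ ⥤ B be the unfolding of the retraction datum, i.e. the functor with D̃(X, n) = D̂^{n+1}(X) and D̃(f, m → n) = σ^Y_n ∘ ⋯ ∘ σ^Y_{m+1} ∘ D̂^{m+1}(f) for f : X → Y and m ≤ n. If there exist a functor E : I × ℕ ⥤ A and a natural isomorphism from the composite of E with F to D̃, then there exist a functor R : I ⥤ A and a natural isomorphism from the composite of R with F to D. -/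

import Mathlib

open CategoryTheory CategoryTheory.Limits

universe v₁ v₂ v₃ u₁ u₂ u₃

variable {I : Type u₁} [Category.{v₁} I] {B : Type u₂} [Category.{v₂} B]

noncomputable section

variable [HasBinaryProducts B] (Dh : I ⥤ B)

/-- `powD Dh X n` is the object `D̂^{n+1}(X)`: thus `powD Dh X 0 = D̂(X)` and
`powD Dh X (n+1) = D̂(X) ⨯ powD Dh X n`.  (Indices are shifted by one: the paper's
`D̂^n(X)`, `n ≥ 1`, is `powD Dh X (n-1)`.) -/
def powD (X : I) : ℕ → B
  | 0 => Dh.obj X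
  | n + 1 => Dh.obj X ⨯ powD X n

/-- `alphaD Dh X n` is `α^X_{n+1} : D̂^{n+1}(X) ⟶ D̂(X)`; `α^X_1` is the identity, and
`α^X_{n+2}` is the first product projection. -/
def alphaD (X : I) : ∀ n : ℕ, powD Dh X n ⟶ Dh.obj X
  | 0 => 𝟙 (Dh.obj X)
  | _ + 1 => prod.fst

/-- `piD Dh X n` is `π^X_{n+2} : D̂^{n+2}(X) ⟶ D̂^{n+1}(X)`, the second product projection. -/
def piD (X : I) (n : ℕ) : powD Dh X (n + 1) ⟶ powD Dh X n :=
  prod.snd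

/-- `powMapD Dh f n` is `D̂^{n+1}(f) : D̂^{n+1}(X) ⟶ D̂^{n+1}(Y)`, i.e. `D̂(f)` for `n = 0`
and the product morphism `D̂(f) ⨯ D̂^{n+1}(f)` afterwards. -/
def powMapD {X Y : I} (f : X ⟶ Y) : ∀ n : ℕ, powD Dh X n ⟶ powD Dh Y n
  | 0 => Dh.map f
  | n + 1 => prod.map (Dh.map f) (powMapD f n)

variable (D : I ⥤ B) (ε : D ⟶ Dh) (μ : Dh ⟶ D)

/-- `rhoD Dh D ε μ X` is `ρ_X = ε_X ∘ μ_X : D̂(X) ⟶ D̂(X)`. -/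
def rhoD (X : I) : Dh.obj X ⟶ Dh.obj X := μ.app X ≫ ε.app X

/-- `sigmaD Dh D ε μ X n` is `σ^X_{n+1} : D̂^{n+1}(X) ⟶ D̂^{n+2}(X)`, the pairing
`⟨ρ_X ∘ α^X_{n+1}, id⟩`. -/
def sigmaD (X : I) (n : ℕ) : powD Dh X n ⟶ powD Dh X (n + 1) :=
  prod.lift (alphaD Dh X n ≫ rhoD Dh D ε μ X) (𝟙 (powD Dh X n))

end

noncomputable section

variable [HasBinaryProducts B] (Dh D : I ⥤ B) (ε : D ⟶ Dh) (μ : Dh ⟶ D)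

/-- The composite `σ^X_{m+k} ∘ ⋯ ∘ σ^X_{m+2} ∘ σ^X_{m+1} : D̂^{m+1}(X) ⟶ D̂^{m+k+1}(X)`
(the identity when `k = 0`). -/
def sigmaChainD (X : I) (m : ℕ) : ∀ k : ℕ, powD Dh X m ⟶ powD Dh X (m + k)
  | 0 => 𝟙 _
  | k + 1 => sigmaChainD X m k ≫ sigmaD Dh D ε μ X (m + k)

end

/-- A morphism `f : P ⟶ Q` is a *projection* if there are an object `Q'` and a morphism
`f' : P ⟶ Q'` exhibiting `P` as a binary product of `Q` and `Q'` with projections `f`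
and `f'`. -/
def IsProjection {C : Type u₃} [Category.{v₃} C] {P Q : C} (f : P ⟶ Q) : Prop :=
  ∃ (Q' : C) (f' : P ⟶ Q'), Nonempty (IsLimit (BinaryFan.mk f f'))

/-- `ProjWitness F φ a e` says that `(a, e)` is a *projectability witness* for
`(φ, X, Bo)` with respect to `F`. -/
structure ProjWitness {A : Type u₃} [Category.{v₃} A] {B' : Type u₂} [Category.{v₂} B']
    (F : A ⥤ B') {X : A} {Bo : B'} (φ : F.obj X ⟶ Bo) {Xb : A}
    (a : X ⟶ Xb) (e : F.obj Xb ⟶ Bo) : Prop where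
  epi : Epi a
  iso : IsIso e
  fac : φ = F.map a ≫ e
  lift : ∀ {Z : A} (f : X ⟶ Z) (η : F.obj Xb ⟶ F.obj Z),
    F.map f = F.map a ≫ η → ∃ g : Xb ⟶ Z, f = a ≫ g ∧ η = F.map g

/-- The functor `F` is *projectable* if every triple `(φ, X, Bo)` with
`φ : F(X) ⟶ Bo` a projection admits a projectability witness. -/
def Projectable {A : Type u₃} [Category.{v₃} A] {B' : Type u₂} [Category.{v₂} B']
    (F : A ⥤ B') : Prop :=
  ∀ ⦃X : A⦄ ⦃Bo : B'⦄ (φ : F.obj X ⟶ Bo), IsProjection φ →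
    ∃ (Xb : A) (a : X ⟶ Xb) (e : F.obj Xb ⟶ Bo), ProjWitness F φ a e


section ProdLemmas

open CategoryTheory CategoryTheory.Limits CategoryTheory.Category

variable [HasBinaryProducts B]

lemma mainlift_lift_alphaD (Dh : I ⥤ B) (X : I) (n : ℕ) {W : B}
    (h1 : W ⟶ Dh.obj X) (h2 : W ⟶ powD Dh X n) :
    (prod.lift h1 h2 : W ⟶ powD Dh X (n + 1)) ≫ alphaD Dh X (n + 1) = h1 :=
  prod.lift_fst _ _

lemma mainlift_lift_piD (Dh : I ⥤ B) (X : I) (n : ℕ) {W : B}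
    (h1 : W ⟶ Dh.obj X) (h2 : W ⟶ powD Dh X n) :
    (prod.lift h1 h2 : W ⟶ powD Dh X (n + 1)) ≫ piD Dh X n = h2 :=
  prod.lift_snd _ _

lemma mainlift_homext_powD (Dh : I ⥤ B) (X : I) (n : ℕ) {W : B}
    {h k : W ⟶ powD Dh X (n + 1)}
    (e1 : h ≫ alphaD Dh X (n + 1) = k ≫ alphaD Dh X (n + 1))
    (e2 : h ≫ piD Dh X n = k ≫ piD Dh X n) : h = k :=
  prod.hom_ext e1 e2

lemma mainlift_sigmaD_alphaD (Dh D : I ⥤ B) (ε : D ⟶ Dh) (μ : Dh ⟶ D) (X : I) (n : ℕ) :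
    sigmaD Dh D ε μ X n ≫ alphaD Dh X (n + 1) = alphaD Dh X n ≫ rhoD Dh D ε μ X :=
  prod.lift_fst _ _

lemma mainlift_powMapD_alphaD (Dh : I ⥤ B) {X Y : I} (f : X ⟶ Y) (n : ℕ) :
    powMapD Dh f (n + 1) ≫ alphaD Dh Y (n + 1) = alphaD Dh X (n + 1) ≫ Dh.map f :=
  prod.map_fst _ _

lemma mainlift_sigmaChainD_one (Dh D : I ⥤ B) (ε : D ⟶ Dh) (μ : Dh ⟶ D) (X : I) (m : ℕ) :
    sigmaChainD Dh D ε μ X m 1 = 𝟙 (powD Dh X m) ≫ sigmaD Dh D ε μ X m :=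
  rfl

lemma mainlift_rho_rho {D Dh : I ⥤ B} (ε : D ⟶ Dh) (μ : Dh ⟶ D)
    (hretr : ∀ X : I, ε.app X ≫ μ.app X = 𝟙 (D.obj X)) (X : I) :
    rhoD Dh D ε μ X ≫ rhoD Dh D ε μ X = rhoD Dh D ε μ X := by
  unfold rhoD
  rw [Category.assoc, ← Category.assoc (ε.app X), hretr, Category.id_comp]

lemma mainlift_rho_mu {D Dh : I ⥤ B} (ε : D ⟶ Dh) (μ : Dh ⟶ D)
    (hretr : ∀ X : I, ε.app X ≫ μ.app X = 𝟙 (D.obj X)) (X : I) :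
    rhoD Dh D ε μ X ≫ μ.app X = μ.app X := by
  unfold rhoD
  rw [Category.assoc, hretr, Category.comp_id]

lemma mainlift_rho_rho_assoc {D Dh : I ⥤ B} (ε : D ⟶ Dh) (μ : Dh ⟶ D)
    (hretr : ∀ X : I, ε.app X ≫ μ.app X = 𝟙 (D.obj X)) (X : I) {W : B}
    (h : Dh.obj X ⟶ W) :
    rhoD Dh D ε μ X ≫ rhoD Dh D ε μ X ≫ h = rhoD Dh D ε μ X ≫ h := by
  rw [← Category.assoc, mainlift_rho_rho ε μ hretr]

lemma mainlift_rho_mu_assoc {D Dh : I ⥤ B} (ε : D ⟶ Dh) (μ : Dh ⟶ D)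
    (hretr : ∀ X : I, ε.app X ≫ μ.app X = 𝟙 (D.obj X)) (X : I) {W : B}
    (h : D.obj X ⟶ W) :
    rhoD Dh D ε μ X ≫ μ.app X ≫ h = μ.app X ≫ h := by
  rw [← Category.assoc, mainlift_rho_mu ε μ hretr]

end ProdLemmas

section MainLiftAux

open CategoryTheory CategoryTheory.Limits CategoryTheory.Category

variable {C : Type*} [Category C]

lemma mainlift_map_comp_of_succ (G : ℕ ⥤ C) {Z : C} (ℓ : ∀ n, G.obj n ⟶ Z)
    (hl : ∀ n, G.map (homOfLE (Nat.le_add_right n 1)) ≫ ℓ (n + 1) = ℓ n)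
    {m n : ℕ} (h : m ≤ n) : G.map (homOfLE h) ≫ ℓ n = ℓ m := by
  induction n, h using Nat.le_induction with
  | base =>
      rw [Subsingleton.elim (homOfLE (le_refl m)) (𝟙 m), G.map_id, Category.id_comp]
  | succ n hmn ih =>
      have : (homOfLE (by omega) : (m : ℕ) ⟶ n + 1) =
          homOfLE hmn ≫ homOfLE (Nat.le_add_right n 1) := Subsingleton.elim _ _
      rw [Subsingleton.elim (homOfLE _ : (m : ℕ) ⟶ n + 1) (homOfLE hmn ≫ homOfLE (Nat.le_add_right n 1)),
        G.map_comp, Category.assoc, hl, ih]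

/-- Build a cocone over an `ℕ`-indexed functor from legs compatible with successor maps. -/
@[simps pt ι_app]
def mainliftCocone (G : ℕ ⥤ C) {Z : C} (ℓ : ∀ n, G.obj n ⟶ Z)
    (hl : ∀ n, G.map (homOfLE (Nat.le_add_right n 1)) ≫ ℓ (n + 1) = ℓ n) : Cocone G where
  pt := Z
  ι :=
    { app := ℓ
      naturality := fun m n h => by
        rw [Subsingleton.elim h (homOfLE (leOfHom h))]
        simpa using mainlift_map_comp_of_succ G ℓ hl (leOfHom h) }

end MainLiftAux

namespace MainLiftPack

open CategoryTheory CategoryTheory.Limits CategoryTheory.Category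

variable {I : Type u₁} [Category.{v₁} I] {B : Type u₂} [Category.{v₂} B]
  {A : Type u₃} [Category.{v₃} A]

noncomputable section Defs

variable [HasColimitsOfShape ℕ A] [HasBinaryProducts B]
  (F : A ⥤ B) [PreservesColimitsOfShape ℕ F]
  (D Dh : I ⥤ B) (ε : D ⟶ Dh) (μ : Dh ⟶ D) (E : I × ℕ ⥤ A)

/-- All the data (extracted by choice, using projectability) needed to build the
lifted functor `R` and the natural isomorphism `R ⋙ F ≅ D`. -/
structure Pack where
  Bo : I → ℕ → A
  b : ∀ (X : I) (n : ℕ), E.obj (X, n + 1) ⟶ Bo X n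
  u : ∀ (X : I) (n : ℕ), F.obj (Bo X n) ⟶ Dh.obj X
  ui : ∀ (X : I) (n : ℕ), Dh.obj X ⟶ F.obj (Bo X n)
  mm : ∀ {X Y : I} (_ : X ⟶ Y) (n : ℕ), Bo X n ⟶ Bo Y (n + 1)
  hbepi : ∀ X n, Epi (b X n)
  hu1 : ∀ X n, u X n ≫ ui X n = 𝟙 _
  hu2 : ∀ X n, ui X n ≫ u X n = 𝟙 _
  hm1 : ∀ {X Y : I} (f : X ⟶ Y) (n : ℕ),
    E.map ((f, homOfLE (Nat.le_add_right (n + 1) 1)) : (X, n + 1) ⟶ (Y, n + 1 + 1)) ≫ b Y (n + 1)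
      = b X n ≫ mm f n
  hm2 : ∀ {X Y : I} (f : X ⟶ Y) (n : ℕ),
    F.map (mm f n) = u X n ≫ Dh.map f ≫ rhoD Dh D ε μ Y ≫ ui Y (n + 1)

variable {F D Dh ε μ E}

namespace Pack

variable (P : Pack F D Dh ε μ E)

/-- The transition maps of the chain approximating `R X`. -/
def t (X : I) (n : ℕ) : P.Bo X n ⟶ P.Bo X (n + 1) := P.mm (𝟙 X) n

/-- The chain approximating `R X`. -/
def chain (X : I) : ℕ ⥤ A := Functor.ofSequence (P.t X)

lemma chain_map_succ (X : I) (n : ℕ) :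
    (P.chain X).map (homOfLE (Nat.le_add_right n 1)) = P.t X n :=
  Functor.ofSequence_map_homOfLE_succ _ n

lemma iota_succ (X : I) (n : ℕ) :
    P.t X n ≫ colimit.ι (P.chain X) (n + 1) = colimit.ι (P.chain X) n := by
  rw [← P.chain_map_succ X n]
  exact colimit.w _ _

lemma square {X Y : I} (f : X ⟶ Y) (n : ℕ) :
    P.t X n ≫ P.mm f (n + 1) = P.mm f n ≫ P.t Y (n + 1) := by
  have := P.hbepi X n
  simp only [Pack.t]
  rw [← cancel_epi (P.b X n), ← assoc, ← P.hm1 (𝟙 X) n, assoc, ← P.hm1 f (n + 1),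
    ← assoc, ← E.map_comp, ← assoc, ← P.hm1 f n, assoc, ← P.hm1 (𝟙 Y) (n + 1),
    ← assoc, ← E.map_comp]
  congr 1
  congr 1
  exact Prod.ext (by simp) (Subsingleton.elim _ _)

lemma compsq {X Y Z : I} (f : X ⟶ Y) (g : Y ⟶ Z) (n : ℕ) :
    P.mm f n ≫ P.mm g (n + 1) = P.mm (f ≫ g) n ≫ P.t Z (n + 1) := by
  have := P.hbepi X n
  simp only [Pack.t]
  rw [← cancel_epi (P.b X n), ← assoc, ← P.hm1 f n, assoc, ← P.hm1 g (n + 1),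
    ← assoc, ← E.map_comp, ← assoc, ← P.hm1 (f ≫ g) n, assoc, ← P.hm1 (𝟙 Z) (n + 1),
    ← assoc, ← E.map_comp]
  congr 1
  congr 1
  exact Prod.ext (by simp) (Subsingleton.elim _ _)

/-- The cocone used to define `R.map f`. -/
def coconeMap {X Y : I} (f : X ⟶ Y) : Cocone (P.chain X) :=
  mainliftCocone (P.chain X) (fun n => P.mm f n ≫ colimit.ι (P.chain Y) (n + 1))
    (fun n => by
      erw [P.chain_map_succ, ← assoc, P.square f n, assoc, P.iota_succ])

/-- The lifted functor `R`. -/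
def R : I ⥤ A where
  obj X := colimit (P.chain X)
  map {X Y} f := colimit.desc (P.chain X) (P.coconeMap f)
  map_id X := by
    apply colimit.hom_ext
    intro n
    rw [colimit.ι_desc]
    show P.mm (𝟙 X) n ≫ colimit.ι (P.chain X) (n + 1) = colimit.ι (P.chain X) n ≫ 𝟙 _
    rw [comp_id]
    exact P.iota_succ X n
  map_comp {X Y Z} f g := by
    apply colimit.hom_ext
    intro n
    erw [colimit.ι_desc, ← assoc, colimit.ι_desc]
    show P.mm (f ≫ g) n ≫ colimit.ι (P.chain Z) (n + 1)
        = (P.mm f n ≫ colimit.ι (P.chain Y) (n + 1)) ≫ colimit.desc (P.chain Y) (P.coconeMap g)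
    erw [assoc, colimit.ι_desc]
    show _ = P.mm f n ≫ P.mm g (n + 1) ≫ colimit.ι (P.chain Z) (n + 1 + 1)
    erw [← assoc (P.mm f n), P.compsq f g n, assoc, P.iota_succ]

lemma hu1_assoc (X : I) (n : ℕ) {W : A} {V : B} (h : F.obj (P.Bo X n) ⟶ V) :
    P.u X n ≫ P.ui X n ≫ h = h := by
  rw [← assoc, P.hu1, id_comp]

lemma hu2_assoc (X : I) (n : ℕ) {V : B} (h : Dh.obj X ⟶ V) :
    P.ui X n ≫ P.u X n ≫ h = h := by
  rw [← assoc, P.hu2, id_comp]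

lemma R_map_ι {X Y : I} (f : X ⟶ Y) (n : ℕ) :
    colimit.ι (P.chain X) n ≫ P.R.map f = P.mm f n ≫ colimit.ι (P.chain Y) (n + 1) :=
  colimit.ι_desc _ _

section Iso

variable (hretr : ∀ X : I, ε.app X ≫ μ.app X = 𝟙 (D.obj X))

/-- The colimit of `F` applied to the chain. -/
def mapIsColim (X : I) : IsColimit (F.mapCocone (colimit.cocone (P.chain X))) :=
  isColimitOfPreserves F (colimit.isColimit _)

lemma F_t (X : I) (n : ℕ) :
    F.map (P.t X n) = P.u X n ≫ rhoD Dh D ε μ X ≫ P.ui X (n + 1) := by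
  rw [Pack.t, P.hm2 (𝟙 X) n, Dh.map_id, id_comp]

include hretr in
/-- The cocone with point `D.obj X` over `chain X ⋙ F`. -/
def DCocone (X : I) : Cocone (P.chain X ⋙ F) :=
  mainliftCocone _ (fun n => P.u X n ≫ μ.app X)
    (fun n => by
      show F.map ((P.chain X).map (homOfLE (Nat.le_add_right n 1))) ≫ _ = _
      erw [P.chain_map_succ, P.F_t, assoc, assoc, ← assoc (P.ui X (n + 1)), P.hu2,
        id_comp, mainlift_rho_mu ε μ hretr])

/-- The comparison map `F (R X) ⟶ D X`. -/
def theta (X : I) : F.obj (P.R.obj X) ⟶ D.obj X :=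
  (P.mapIsColim X).desc (P.DCocone hretr X)

lemma theta_fac (X : I) (n : ℕ) :
    F.map (colimit.ι (P.chain X) n) ≫ P.theta hretr X = P.u X n ≫ μ.app X := by
  have h := (P.mapIsColim X).fac (P.DCocone hretr X) n
  exact h

/-- The inverse comparison map. -/
def thetaInv (X : I) : D.obj X ⟶ F.obj (P.R.obj X) :=
  ε.app X ≫ P.ui X 0 ≫ F.map (colimit.ι (P.chain X) 0)

lemma F_iota (X : I) (n : ℕ) :
    F.map (colimit.ι (P.chain X) n)
      = P.u X n ≫ rhoD Dh D ε μ X ≫ P.ui X (n + 1) ≫ F.map (colimit.ι (P.chain X) (n + 1)) := by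
  erw [← P.iota_succ X n, F.map_comp, P.F_t]
  erw [Category.assoc, Category.assoc]
  rfl

include hretr in
lemma rho_ui_iota (X : I) (n : ℕ) :
    rhoD Dh D ε μ X ≫ P.ui X 0 ≫ F.map (colimit.ι (P.chain X) 0)
      = rhoD Dh D ε μ X ≫ P.ui X n ≫ F.map (colimit.ι (P.chain X) n) := by
  induction n with
  | zero => rfl
  | succ n ih =>
      erw [ih, P.F_iota X n]
      simp only [Category.assoc, P.hu2_assoc, mainlift_rho_rho_assoc ε μ hretr]

lemma theta_thetaInv (X : I) :
    P.theta hretr X ≫ P.thetaInv X = 𝟙 _ := by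
  apply (P.mapIsColim X).hom_ext
  intro n
  simp only [Functor.mapCocone_ι_app, colimit.cocone_ι]
  show F.map (colimit.ι (P.chain X) n) ≫ P.theta hretr X ≫ P.thetaInv X
      = F.map (colimit.ι (P.chain X) n) ≫ 𝟙 (F.obj (colimit (P.chain X)))
  erw [Category.comp_id, ← assoc, P.theta_fac hretr X n, Pack.thetaInv, assoc, ← assoc (μ.app X)]
  show P.u X n ≫ rhoD Dh D ε μ X ≫ P.ui X 0 ≫ F.map (colimit.ι (P.chain X) 0)
      = F.map (colimit.ι (P.chain X) n)
  rw [P.rho_ui_iota hretr X n]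
  conv_lhs => erw [P.F_iota X n]
  simp only [Category.assoc, P.hu2_assoc, mainlift_rho_rho_assoc ε μ hretr]
  exact (P.F_iota X n).symm

lemma thetaInv_theta (X : I) :
    P.thetaInv X ≫ P.theta hretr X = 𝟙 _ := by
  erw [Pack.thetaInv, assoc, assoc, P.theta_fac hretr X 0, ← assoc (P.ui X 0), P.hu2,
    id_comp, hretr]

lemma theta_natural {X Y : I} (f : X ⟶ Y) :
    F.map (P.R.map f) ≫ P.theta hretr Y = P.theta hretr X ≫ D.map f := by
  apply (P.mapIsColim X).hom_ext
  intro n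
  simp only [Functor.mapCocone_ι_app, colimit.cocone_ι]
  erw [← assoc, ← F.map_comp, P.R_map_ι f n, F.map_comp, assoc, P.theta_fac hretr Y (n + 1),
    P.hm2 f n]
  conv_rhs => erw [← Category.assoc, P.theta_fac hretr X n]
  show (P.u X n ≫ Dh.map f ≫ rhoD Dh D ε μ Y ≫ P.ui Y (n + 1)) ≫ P.u Y (n + 1) ≫ μ.app Y
    = (P.u X n ≫ μ.app X) ≫ D.map f
  simp only [Category.assoc, P.hu2_assoc, mainlift_rho_mu_assoc ε μ hretr,
    mainlift_rho_mu ε μ hretr]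
  rw [μ.naturality f]

include P hretr in
/-- The main conclusion given the packed data. -/
theorem main : ∃ R : I ⥤ A, Nonempty (R ⋙ F ≅ D) := by
  refine ⟨P.R, ⟨NatIso.ofComponents
    (fun X => ⟨P.theta hretr X, P.thetaInv X, P.theta_thetaInv hretr X,
      P.thetaInv_theta hretr X⟩) ?_⟩⟩
  intro X Y f
  exact P.theta_natural hretr f

end Iso

end Pack

end Defs

end MainLiftPack

/-- (Theorem `T:Main`.)  Let `F : A ⥤ B` and let `(D, D̂, ε, μ)` be a
retraction datum on `I` in `B`.  Assume `A` has colimits of `ℕ`-indexed chains, `B` has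
binary products, `F` preserves colimits of `ℕ`-indexed chains, and `F` is projectable.
Let `D̃ : I × ℕ ⥤ B` be the unfolding of the retraction datum, i.e. the functor with
`D̃(X, n) = D̂^{n+1}(X)` and `D̃(f, m → m+k) = σ^Y_{m+k} ∘ ⋯ ∘ σ^Y_{m+1} ∘ D̂^{m+1}(f)`.
If there are a functor `E : I × ℕ ⥤ A` and a natural isomorphism `E ⋙ F ≅ D̃`, then
there are a functor `R : I ⥤ A` and a natural isomorphism `R ⋙ F ≅ D`. -/
theorem main_lifting_theorem {A : Type u₃} [Category.{v₃} A]
    [HasColimitsOfShape ℕ A] [HasBinaryProducts B]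
    (F : A ⥤ B) [PreservesColimitsOfShape ℕ F] (hproj : Projectable F)
    (D Dh : I ⥤ B) (ε : D ⟶ Dh) (μ : Dh ⟶ D)
    (hretr : ∀ X : I, ε.app X ≫ μ.app X = 𝟙 (D.obj X))
    (Dt : I × ℕ ⥤ B) (hobj : ∀ (X : I) (n : ℕ), Dt.obj (X, n) = powD Dh X n)
    (hmap : ∀ {X Y : I} (f : X ⟶ Y) (m k : ℕ),
      Dt.map ((f, homOfLE (Nat.le_add_right m k)) : (X, m) ⟶ (Y, m + k)) =
        eqToHom (hobj X m) ≫ powMapD Dh f m ≫ sigmaChainD Dh D ε μ Y m k ≫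
          eqToHom (hobj Y (m + k)).symm)
    (E : I × ℕ ⥤ A) (hlift : Nonempty (E ⋙ F ≅ Dt)) :
    ∃ R : I ⥤ A, Nonempty (R ⋙ F ≅ D) := by
  classical
  obtain ⟨φiso⟩ := hlift
  -- the pointwise comparison isomorphisms, together with their key property
  obtain ⟨g, giso, key⟩ :
      ∃ g : ∀ (X : I) (n : ℕ), F.obj (E.obj (X, n)) ⟶ powD Dh X n,
        (∀ X n, IsIso (g X n)) ∧
        (∀ (X Y : I) (f : X ⟶ Y) (n : ℕ),
          F.map (E.map ((f, homOfLE (Nat.le_add_right (n + 1) 1)) :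
              (X, n + 1) ⟶ (Y, n + 1 + 1))) ≫ g Y (n + 1 + 1)
            = g X (n + 1) ≫ powMapD Dh f (n + 1) ≫ sigmaD Dh D ε μ Y (n + 1)) := by
    refine ⟨fun X n => φiso.hom.app (X, n) ≫ eqToHom (hobj X n),
      fun X n => inferInstance, ?_⟩
    intro X Y f n
    have hnat := φiso.hom.naturality
      ((f, homOfLE (Nat.le_add_right (n + 1) 1)) : (X, n + 1) ⟶ (Y, n + 1 + 1))
    dsimp only [Functor.comp_map] at hnat
    rw [← Category.assoc, hnat, hmap f (n + 1) 1,
      mainlift_sigmaChainD_one Dh D ε μ Y (n + 1)]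
    simp
  -- the projectability witnesses
  have hproj' : ∀ (X : I) (n : ℕ), ∃ (Xb : A) (a : E.obj (X, n + 1) ⟶ Xb)
      (e : F.obj Xb ⟶ Dh.obj X),
      ProjWitness F (g X (n + 1) ≫ alphaD Dh X (n + 1)) a e := by
    intro X n
    refine hproj _ ⟨powD Dh X n, g X (n + 1) ≫ piD Dh X n, ⟨?_⟩⟩
    haveI := giso X (n + 1)
    refine BinaryFan.isLimitMk
      (fun s => (prod.lift s.fst s.snd : s.pt ⟶ powD Dh X (n + 1)) ≫ inv (I := giso X (n + 1)) (g X (n + 1)))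
      (fun s => ?_) (fun s => ?_) (fun s m h1 h2 => ?_)
    · erw [Category.assoc, IsIso.inv_hom_id_assoc, mainlift_lift_alphaD]
    · erw [Category.assoc, IsIso.inv_hom_id_assoc, mainlift_lift_piD]
    · erw [IsIso.eq_comp_inv]
      refine mainlift_homext_powD Dh X n ?_ ?_
      · erw [mainlift_lift_alphaD, Category.assoc]
        exact h1
      · erw [mainlift_lift_piD, Category.assoc]
        exact h2
  choose Bo b u w using hproj'
  -- the inverses of the isomorphisms `u`
  obtain ⟨ui, hu1, hu2⟩ :
      ∃ ui : ∀ (X : I) (n : ℕ), Dh.obj X ⟶ F.obj (Bo X n),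
        (∀ X n, u X n ≫ ui X n = 𝟙 _) ∧ (∀ X n, ui X n ≫ u X n = 𝟙 _) := by
    refine ⟨fun X n => letI := (w X n).iso; inv (u X n), fun X n => ?_, fun X n => ?_⟩
    · letI := (w X n).iso; simp
    · letI := (w X n).iso; simp
  -- realizability of the transition maps
  have real : ∀ (X Y : I) (f : X ⟶ Y) (n : ℕ),
      F.map (E.map ((f, homOfLE (Nat.le_add_right (n + 1) 1)) :
          (X, n + 1) ⟶ (Y, n + 1 + 1)) ≫ b Y (n + 1))
        = F.map (b X n) ≫ (u X n ≫ Dh.map f ≫ rhoD Dh D ε μ Y ≫ ui Y (n + 1)) := by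
    intro X Y f n
    have fb : F.map (b Y (n + 1))
        = g Y (n + 1 + 1) ≫ alphaD Dh Y (n + 1 + 1) ≫ ui Y (n + 1) := by
      calc F.map (b Y (n + 1))
          = F.map (b Y (n + 1)) ≫ u Y (n + 1) ≫ ui Y (n + 1) := by
            rw [hu1, Category.comp_id]
        _ = (F.map (b Y (n + 1)) ≫ u Y (n + 1)) ≫ ui Y (n + 1) := by
            rw [Category.assoc]
        _ = (g Y (n + 1 + 1) ≫ alphaD Dh Y (n + 1 + 1)) ≫ ui Y (n + 1) := by
            rw [← (w Y (n + 1)).fac]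
        _ = g Y (n + 1 + 1) ≫ alphaD Dh Y (n + 1 + 1) ≫ ui Y (n + 1) := by
            rw [Category.assoc]
    rw [F.map_comp, fb, ← Category.assoc, key X Y f n]
    calc (g X (n + 1) ≫ powMapD Dh f (n + 1) ≫ sigmaD Dh D ε μ Y (n + 1))
          ≫ alphaD Dh Y (n + 1 + 1) ≫ ui Y (n + 1)
        = g X (n + 1) ≫ powMapD Dh f (n + 1)
            ≫ (sigmaD Dh D ε μ Y (n + 1) ≫ alphaD Dh Y (n + 1 + 1)) ≫ ui Y (n + 1) := by
          simp only [Category.assoc]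
      _ = g X (n + 1) ≫ (powMapD Dh f (n + 1) ≫ alphaD Dh Y (n + 1))
            ≫ rhoD Dh D ε μ Y ≫ ui Y (n + 1) := by
          rw [mainlift_sigmaD_alphaD]
          simp only [Category.assoc]
      _ = (g X (n + 1) ≫ alphaD Dh X (n + 1))
            ≫ Dh.map f ≫ rhoD Dh D ε μ Y ≫ ui Y (n + 1) := by
          rw [mainlift_powMapD_alphaD]
          simp only [Category.assoc]
      _ = F.map (b X n) ≫ (u X n ≫ Dh.map f ≫ rhoD Dh D ε μ Y ≫ ui Y (n + 1)) := by
          rw [(w X n).fac]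
          simp only [Category.assoc]
  -- lift the transition maps along the witnesses
  have exm : ∀ (X Y : I) (f : X ⟶ Y) (n : ℕ),
      ∃ mmap : Bo X n ⟶ Bo Y (n + 1),
        E.map ((f, homOfLE (Nat.le_add_right (n + 1) 1)) :
            (X, n + 1) ⟶ (Y, n + 1 + 1)) ≫ b Y (n + 1) = b X n ≫ mmap ∧
        u X n ≫ Dh.map f ≫ rhoD Dh D ε μ Y ≫ ui Y (n + 1) = F.map mmap :=
    fun X Y f n => (w X n).lift _ _ (real X Y f n)
  choose mm hmm1 hmm2 using exm
  exact MainLiftPack.Pack.main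
    { Bo := Bo, b := b, u := u, ui := ui,
      mm := fun {X Y} f n => mm X Y f n,
      hbepi := fun X n => (w X n).epi,
      hu1 := hu1, hu2 := hu2,
      hm1 := fun {X Y} f n => hmm1 X Y f n,
      hm2 := fun {X Y} f n => (hmm2 X Y f n).symm } hretr
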